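/- Let X be a finite set, π : X → V with π(x) ≠ 0, and suppose π = π1 + π2 pointwise with ⟪π1(x), π2(y)⟫ = 0 for all x, y ∈ X, and ‖π1(x)‖ = c1‖π(x)‖, ‖π2(x)‖ = c2‖π(x)‖ with c1, c2 > 0 for all x. Then for any labeling σ with N = Σ|σ| > 0: L(σ, π) = c1²·L(σ, π1) + c2²·L(σ, π2), where L(σ, ρ) = (Σ σ(x,y)⟪ρ(x),ρ(y)⟫/(‖ρ(x)‖‖ρ(y)‖))/N. -/

import Mathlib

open RealInnerProductSpace

theorem stmt_11 {X : Type*} [Fintype X] [Nonempty X]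
    {V : Type*} [NormedAddCommGroup V] [InnerProductSpace ℝ V]
    (π π1 π2 : X → V) (c1 c2 : ℝ) (hc1 : 0 < c1) (hc2 : 0 < c2)
    (hπ : ∀ x, π x ≠ 0)
    (hdec : ∀ x, π x = π1 x + π2 x)
    (horth : ∀ x y, ⟪π1 x, π2 y⟫ = 0)
    (hn1 : ∀ x, ‖π1 x‖ = c1 * ‖π x‖) (hn2 : ∀ x, ‖π2 x‖ = c2 * ‖π x‖)
    (σ : X × X → ℝ) (hN : 0 < ∑ p : X × X, |σ p|) :
    (∑ p : X × X, σ p * (⟪π p.1, π p.2⟫ / (‖π p.1‖ * ‖π p.2‖))) /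
        (∑ p : X × X, |σ p|) =
    c1 ^ 2 * ((∑ p : X × X, σ p * (⟪π1 p.1, π1 p.2⟫ / (‖π1 p.1‖ * ‖π1 p.2‖))) /
        (∑ p : X × X, |σ p|)) +
    c2 ^ 2 * ((∑ p : X × X, σ p * (⟪π2 p.1, π2 p.2⟫ / (‖π2 p.1‖ * ‖π2 p.2‖))) /
        (∑ p : X × X, |σ p|)) := by
  have hNne : (∑ p : X × X, |σ p|) ≠ 0 := ne_of_gt hN
  rw [mul_div_assoc' , mul_div_assoc', ← add_div]
  congr 1
  rw [Finset.mul_sum, Finset.mul_sum, ← Finset.sum_add_distrib]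
  apply Finset.sum_congr rfl
  intro p _
  have hx := hπ p.1
  have hy := hπ p.2
  have hnx : ‖π p.1‖ ≠ 0 := norm_ne_zero_iff.mpr hx
  have hny : ‖π p.2‖ ≠ 0 := norm_ne_zero_iff.mpr hy
  have hinner : ⟪π p.1, π p.2⟫ = ⟪π1 p.1, π1 p.2⟫ + ⟪π2 p.1, π2 p.2⟫ := by
    rw [hdec p.1, hdec p.2, inner_add_left, inner_add_right, inner_add_right,
      horth]
    have h21 : ⟪π2 p.1, π1 p.2⟫ = (0:ℝ) := by
      rw [real_inner_comm]; exact horth _ _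
    rw [h21]
    ring
  rw [hinner, hn1 p.1, hn1 p.2, hn2 p.1, hn2 p.2]
  field_simp
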